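/- The Flammia POVM is rank-1 complete: Let d ≥ 2, a, b > 0, and let ψ, φ ∈ ℂ^d be unit vectors with ψ_0 ≠ 0. If Tr(E · ψψ†) = Tr(E · φφ†) for every E among E_0 = a·e_0e_0†, E_k = b(𝟙 + e_0e_k† + e_ke_0†), and Ẽ_k = b(𝟙 − i·e_0e_k† + i·e_ke_0†) for k = 1, …, d−1, then ψψ† = φφ† (equivalently φ = c·ψ for some c ∈ ℂ with |c| = 1). -/

import Mathlib

open Matrix

/-- The rank-one (outer-product) matrix `ψψ†`, with entries `ψ_j · conj(ψ_k)`. -/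
noncomputable def outerProd {n : Type*} (ψ : n → ℂ) : Matrix n n ℂ :=
  Matrix.of fun j k => ψ j * star (ψ k)

lemma trace_std_mul {n : Type*} [Fintype n] [DecidableEq n] (i j : n) (M : Matrix n n ℂ) :
    (Matrix.single i j (1:ℂ) * M).trace = M j i := by
  rw [Matrix.trace]
  rw [Finset.sum_eq_single i]
  · simp [Matrix.diag]
  · intro k _ hk; simp [Matrix.diag, hk]
  · simp

lemma trace_outer {n : Type*} [Fintype n] (ψ : n → ℂ) (h : ∑ j, ‖ψ j‖ ^ 2 = 1) :
    (outerProd ψ).trace = 1 := by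
  rw [Matrix.trace]
  have h2 : ∀ j, (outerProd ψ).diag j = ((‖ψ j‖ ^ 2 : ℝ) : ℂ) := by
    intro j
    rw [Matrix.diag]
    rw [show (outerProd ψ) j j = ψ j * star (ψ j) from rfl]
    rw [show star (ψ j) = (starRingEnd ℂ) (ψ j) from rfl, Complex.mul_conj']
    push_cast; ring
  simp_rw [h2, ← Complex.ofReal_sum, h, Complex.ofReal_one]

theorem flammia_rank1_complete (d : ℕ) (hd : 2 ≤ d) (a b : ℝ) (ha : 0 < a) (hb : 0 < b)
    (ψ φ : Fin d → ℂ)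
    (hψ : ∑ j, ‖ψ j‖ ^ 2 = 1) (hφ : ∑ j, ‖φ j‖ ^ 2 = 1)
    (hψ0 : ψ ⟨0, by omega⟩ ≠ 0)
    (h0 : (((a : ℂ) • Matrix.single (⟨0, by omega⟩ : Fin d) (⟨0, by omega⟩ : Fin d) 1)
            * outerProd ψ).trace
        = (((a : ℂ) • Matrix.single (⟨0, by omega⟩ : Fin d) (⟨0, by omega⟩ : Fin d) 1)
            * outerProd φ).trace)
    (hE : ∀ k : Fin d, k ≠ ⟨0, by omega⟩ →
      (((b : ℂ) • ((1 : Matrix (Fin d) (Fin d) ℂ)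
          + Matrix.single (⟨0, by omega⟩ : Fin d) k 1
          + Matrix.single k (⟨0, by omega⟩ : Fin d) 1)) * outerProd ψ).trace
        = (((b : ℂ) • ((1 : Matrix (Fin d) (Fin d) ℂ)
          + Matrix.single (⟨0, by omega⟩ : Fin d) k 1
          + Matrix.single k (⟨0, by omega⟩ : Fin d) 1)) * outerProd φ).trace)
    (hEt : ∀ k : Fin d, k ≠ ⟨0, by omega⟩ →
      (((b : ℂ) • ((1 : Matrix (Fin d) (Fin d) ℂ)
          - Complex.I • Matrix.single (⟨0, by omega⟩ : Fin d) k 1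
          + Complex.I • Matrix.single k (⟨0, by omega⟩ : Fin d) 1)) * outerProd ψ).trace
        = (((b : ℂ) • ((1 : Matrix (Fin d) (Fin d) ℂ)
          - Complex.I • Matrix.single (⟨0, by omega⟩ : Fin d) k 1
          + Complex.I • Matrix.single k (⟨0, by omega⟩ : Fin d) 1)) * outerProd φ).trace) :
    outerProd ψ = outerProd φ := by
  set e0 : Fin d := ⟨0, by omega⟩ with he0
  have ha' : (a : ℂ) ≠ 0 := by exact_mod_cast ha.ne'
  have hb' : (b : ℂ) ≠ 0 := by exact_mod_cast hb.ne'
  have htψ := trace_outer ψ hψ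
  have htφ := trace_outer φ hφ
  -- h00 : diagonal
  have h00 : outerProd ψ e0 e0 = outerProd φ e0 e0 := by
    rw [Matrix.smul_mul, Matrix.smul_mul, Matrix.trace_smul, Matrix.trace_smul,
      trace_std_mul, trace_std_mul] at h0
    exact mul_left_cancel₀ ha' h0
  -- off diagonal with 0
  have key : ∀ k : Fin d, k ≠ e0 →
      outerProd ψ e0 k = outerProd φ e0 k ∧ outerProd ψ k e0 = outerProd φ k e0 := by
    intro k hk
    have h1 := hE k hk
    have h2 := hEt k hk
    simp only [Matrix.smul_mul, Matrix.add_mul, Matrix.sub_mul, Matrix.one_mul,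
      Matrix.trace_smul, Matrix.trace_add, Matrix.trace_sub, trace_std_mul,
      htψ, htφ, smul_eq_mul] at h1
    have h1' : outerProd ψ k e0 + outerProd ψ e0 k
        = outerProd φ k e0 + outerProd φ e0 k := by
      have := mul_left_cancel₀ hb' h1
      linear_combination this
    simp only [Matrix.smul_mul, Matrix.add_mul, Matrix.sub_mul, Matrix.one_mul,
      Matrix.trace_smul, Matrix.trace_add, Matrix.trace_sub, trace_std_mul,
      htψ, htφ, smul_eq_mul] at h2
    have h2' : - Complex.I * outerProd ψ k e0 + Complex.I * outerProd ψ e0 k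
        = - Complex.I * outerProd φ k e0 + Complex.I * outerProd φ e0 k := by
      have := mul_left_cancel₀ hb' h2
      linear_combination this
    have h2'' : outerProd ψ k e0 - outerProd ψ e0 k = outerProd φ k e0 - outerProd φ e0 k := by
      linear_combination Complex.I * h2' + (outerProd ψ k e0 - outerProd ψ e0 k
        - outerProd φ k e0 + outerProd φ e0 k) * Complex.I_sq
    exact ⟨by linear_combination (h1' - h2'') / 2, by linear_combination (h1' + h2'') / 2⟩
  have hne : ψ e0 * star (ψ e0) ≠ 0 := mul_ne_zero hψ0 (star_ne_zero.mpr hψ0)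
  ext j k
  simp only [outerProd, Matrix.of_apply] at key h00 ⊢
  by_cases hj : j = e0
  · subst hj
    by_cases hk2 : k = e0
    · subst hk2; exact h00
    · exact (key k hk2).1
  · by_cases hk2 : k = e0
    · subst hk2; exact (key j hj).2
    · have e1 := (key j hj).2
      have e2 := (key k hk2).1
      apply mul_right_cancel₀ hne
      calc ψ j * star (ψ k) * (ψ e0 * star (ψ e0))
          = (ψ j * star (ψ e0)) * (ψ e0 * star (ψ k)) := by ring
        _ = (φ j * star (φ e0)) * (φ e0 * star (φ k)) := by rw [e1, e2]
        _ = φ j * star (φ k) * (φ e0 * star (φ e0)) := by ring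
        _ = φ j * star (φ k) * (ψ e0 * star (ψ e0)) := by rw [h00]
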